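/- Let G₁ and G₂ be simple connected graphs with n₁ = |V(G₁)|, n₂ = |V(G₂)| vertices and m₁ = |E(G₁)|, m₂ = |E(G₂)| edges. Then the F-index of the vertex Q-join satisfies F(G₁ ∨̇_Q G₂) = F(G₁) + F(G₂) + 3n₂M₁(G₁) + 3n₁M₁(G₂) + M₄(G₁) + 3ReZM(G₁) + 6m₁n₂² + 6m₂n₁² + n₁n₂(n₁² + n₂²). -/

import Mathlib

/-- The subdivision graph `S(G)`: a new vertex is inserted into each edge of `G`
(each edge is replaced by a path of length 2). The inserted vertices form the
right summand `↥G.edgeSet`. -/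
def Sgraph {V : Type*} (G : SimpleGraph V) : SimpleGraph (V ⊕ ↥G.edgeSet) where
  Adj x y :=
    match x, y with
    | Sum.inl v, Sum.inr e => v ∈ (e : Sym2 V)
    | Sum.inr e, Sum.inl v => v ∈ (e : Sym2 V)
    | _, _ => False
  symm := by constructor; rintro (v | e) (w | f) h <;> exact h
  loopless := by constructor; rintro (v | e) h <;> exact h

/-- The graph `R(G)`: obtained from `G` by inserting a new vertex into each edge of `G`
and joining each new vertex to the end vertices of its corresponding edge. -/
def Rgraph {V : Type*} (G : SimpleGraph V) : SimpleGraph (V ⊕ ↥G.edgeSet) where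
  Adj x y :=
    match x, y with
    | Sum.inl v, Sum.inl w => G.Adj v w
    | Sum.inl v, Sum.inr e => v ∈ (e : Sym2 V)
    | Sum.inr e, Sum.inl v => v ∈ (e : Sym2 V)
    | Sum.inr _, Sum.inr _ => False
  symm := by
    constructor
    rintro (v | e) (w | f) h
    · exact G.adj_symm h
    · exact h
    · exact h
    · exact h
  loopless := by
    constructor
    rintro (v | e) h
    · exact G.irrefl h
    · exact h

/-- The graph `Q(G)`: obtained from `G` by inserting a new vertex into each edge of `G`,
then joining by edges those pairs of new vertices lying on adjacent edges of `G`. -/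
def Qgraph {V : Type*} (G : SimpleGraph V) : SimpleGraph (V ⊕ ↥G.edgeSet) where
  Adj x y :=
    match x, y with
    | Sum.inl _, Sum.inl _ => False
    | Sum.inl v, Sum.inr e => v ∈ (e : Sym2 V)
    | Sum.inr e, Sum.inl v => v ∈ (e : Sym2 V)
    | Sum.inr e, Sum.inr f => e ≠ f ∧ ∃ v, v ∈ (e : Sym2 V) ∧ v ∈ (f : Sym2 V)
  symm := by
    constructor
    rintro (v | e) (w | f) h
    · exact h
    · exact h
    · exact h
    · exact ⟨h.1.symm, by obtain ⟨v, h1, h2⟩ := h.2; exact ⟨v, h2, h1⟩⟩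
  loopless := by
    constructor
    rintro (v | e) h
    · exact h
    · exact h.1 rfl

/-- The total graph `T(G)`: obtained from `G` by inserting a new vertex into each edge,
joining each new vertex to the end vertices of its corresponding edge, and joining by
edges those pairs of new vertices lying on adjacent edges of `G`. -/
def Tgraph {V : Type*} (G : SimpleGraph V) : SimpleGraph (V ⊕ ↥G.edgeSet) where
  Adj x y :=
    match x, y with
    | Sum.inl v, Sum.inl w => G.Adj v w
    | Sum.inl v, Sum.inr e => v ∈ (e : Sym2 V)
    | Sum.inr e, Sum.inl v => v ∈ (e : Sym2 V)
    | Sum.inr e, Sum.inr f => e ≠ f ∧ ∃ v, v ∈ (e : Sym2 V) ∧ v ∈ (f : Sym2 V)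
  symm := by
    constructor
    rintro (v | e) (w | f) h
    · exact G.adj_symm h
    · exact h
    · exact h
    · exact ⟨h.1.symm, by obtain ⟨v, h1, h2⟩ := h.2; exact ⟨v, h2, h1⟩⟩
  loopless := by
    constructor
    rintro (v | e) h
    · exact G.irrefl h
    · exact h.1 rfl

/-- The disjoint union of `H` and `K` together with all edges joining a vertex `a` of `H`
with `P a` to every vertex of `K`. -/
def joinOn {A B : Type*} (H : SimpleGraph A) (K : SimpleGraph B) (P : A → Prop) :
    SimpleGraph (A ⊕ B) where
  Adj x y :=
    match x, y with
    | Sum.inl a, Sum.inl a' => H.Adj a a'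
    | Sum.inr b, Sum.inr b' => K.Adj b b'
    | Sum.inl a, Sum.inr _ => P a
    | Sum.inr _, Sum.inl a => P a
  symm := by
    constructor
    rintro (a | b) (a' | b') h
    · exact H.adj_symm h
    · exact h
    · exact h
    · exact K.adj_symm h
  loopless := by
    constructor
    rintro (a | b) h
    · exact H.irrefl h
    · exact K.irrefl h

/-- The vertex S-join `G₁ ∨̇_S G₂`: obtained from `S(G₁)` and `G₂` by joining each vertex
of `V(G₁)` to every vertex of `G₂`. -/
def vertexSJoin {V₁ V₂ : Type*} (G₁ : SimpleGraph V₁) (G₂ : SimpleGraph V₂) :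
    SimpleGraph ((V₁ ⊕ ↥G₁.edgeSet) ⊕ V₂) :=
  joinOn (Sgraph G₁) G₂ (fun x => x.isLeft)

/-- The edge S-join `G₁ ∨̱_S G₂`: obtained from `S(G₁)` and `G₂` by joining each inserted
vertex (each vertex of `I(G₁)`) to every vertex of `G₂`. -/
def edgeSJoin {V₁ V₂ : Type*} (G₁ : SimpleGraph V₁) (G₂ : SimpleGraph V₂) :
    SimpleGraph ((V₁ ⊕ ↥G₁.edgeSet) ⊕ V₂) :=
  joinOn (Sgraph G₁) G₂ (fun x => x.isRight)

/-- The vertex R-join `G₁ ∨̇_R G₂`. -/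
def vertexRJoin {V₁ V₂ : Type*} (G₁ : SimpleGraph V₁) (G₂ : SimpleGraph V₂) :
    SimpleGraph ((V₁ ⊕ ↥G₁.edgeSet) ⊕ V₂) :=
  joinOn (Rgraph G₁) G₂ (fun x => x.isLeft)

/-- The edge R-join `G₁ ∨̱_R G₂`. -/
def edgeRJoin {V₁ V₂ : Type*} (G₁ : SimpleGraph V₁) (G₂ : SimpleGraph V₂) :
    SimpleGraph ((V₁ ⊕ ↥G₁.edgeSet) ⊕ V₂) :=
  joinOn (Rgraph G₁) G₂ (fun x => x.isRight)

/-- The vertex Q-join `G₁ ∨̇_Q G₂`. -/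
def vertexQJoin {V₁ V₂ : Type*} (G₁ : SimpleGraph V₁) (G₂ : SimpleGraph V₂) :
    SimpleGraph ((V₁ ⊕ ↥G₁.edgeSet) ⊕ V₂) :=
  joinOn (Qgraph G₁) G₂ (fun x => x.isLeft)

/-- The edge Q-join `G₁ ∨̱_Q G₂`. -/
def edgeQJoin {V₁ V₂ : Type*} (G₁ : SimpleGraph V₁) (G₂ : SimpleGraph V₂) :
    SimpleGraph ((V₁ ⊕ ↥G₁.edgeSet) ⊕ V₂) :=
  joinOn (Qgraph G₁) G₂ (fun x => x.isRight)

/-- The vertex T-join `G₁ ∨̇_T G₂`. -/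
def vertexTJoin {V₁ V₂ : Type*} (G₁ : SimpleGraph V₁) (G₂ : SimpleGraph V₂) :
    SimpleGraph ((V₁ ⊕ ↥G₁.edgeSet) ⊕ V₂) :=
  joinOn (Tgraph G₁) G₂ (fun x => x.isLeft)

/-- The edge T-join `G₁ ∨̱_T G₂`. -/
def edgeTJoin {V₁ V₂ : Type*} (G₁ : SimpleGraph V₁) (G₂ : SimpleGraph V₂) :
    SimpleGraph ((V₁ ⊕ ↥G₁.edgeSet) ⊕ V₂) :=
  joinOn (Tgraph G₁) G₂ (fun x => x.isRight)

/-- Degree of a vertex in a graph on a finite vertex type. -/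
noncomputable def gdeg {V : Type*} [Finite V] (G : SimpleGraph V) (v : V) : ℕ :=
  haveI : Fintype ↥(G.neighborSet v) := Fintype.ofFinite _
  G.degree v

/-- The forgotten topological index (F-index): `F(G) = ∑_{v ∈ V(G)} d_G(v)³`. -/
noncomputable def Findex {V : Type*} [Finite V] (G : SimpleGraph V) : ℕ :=
  haveI := Fintype.ofFinite V
  ∑ v : V, gdeg G v ^ 3

/-- The first Zagreb index: `M₁(G) = ∑_{v ∈ V(G)} d_G(v)²`. -/
noncomputable def M1 {V : Type*} [Finite V] (G : SimpleGraph V) : ℕ :=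
  haveI := Fintype.ofFinite V
  ∑ v : V, gdeg G v ^ 2

/-- `M₄(G) = ∑_{v ∈ V(G)} d_G(v)⁴`. -/
noncomputable def M4 {V : Type*} [Finite V] (G : SimpleGraph V) : ℕ :=
  haveI := Fintype.ofFinite V
  ∑ v : V, gdeg G v ^ 4

/-- The hyper Zagreb index: `HM(G) = ∑_{uv ∈ E(G)} (d_G(u) + d_G(v))²`. -/
noncomputable def HM {V : Type*} [Finite V] (G : SimpleGraph V) : ℕ :=
  haveI : Fintype ↥G.edgeSet := Fintype.ofFinite _
  ∑ e : ↥G.edgeSet,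
    Sym2.lift ⟨fun u v => (gdeg G u + gdeg G v) ^ 2,
      fun u v => by dsimp only; rw [add_comm]⟩ (e : Sym2 V)

/-- The redefined Zagreb index:
`ReZM(G) = ∑_{uv ∈ E(G)} d_G(u) d_G(v) (d_G(u) + d_G(v))`. -/
noncomputable def ReZM {V : Type*} [Finite V] (G : SimpleGraph V) : ℕ :=
  haveI : Fintype ↥G.edgeSet := Fintype.ofFinite _
  ∑ e : ↥G.edgeSet,
    Sym2.lift ⟨fun u v => gdeg G u * gdeg G v * (gdeg G u + gdeg G v),
      fun u v => by dsimp only; ring⟩ (e : Sym2 V)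

/-- The number of edges of `G`. -/
noncomputable def numEdges {V : Type*} (G : SimpleGraph V) : ℕ :=
  Nat.card ↥G.edgeSet


section AuxLemmas

lemma gdeg_eq_natCard {V : Type*} [Finite V] (G : SimpleGraph V) (v : V) :
    gdeg G v = Nat.card (G.neighborSet v) := by
  haveI : Fintype ↥(G.neighborSet v) := Fintype.ofFinite _
  unfold gdeg
  rw [← SimpleGraph.card_neighborSet_eq_degree, Nat.card_eq_fintype_card]
  exact congrArg (@Fintype.card _) (Subsingleton.elim _ _)

lemma natCard_incidence {V : Type*} [Finite V] (G : SimpleGraph V) (v : V) :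
    Nat.card {e : ↥G.edgeSet // v ∈ (e : Sym2 V)} = gdeg G v := by
  classical
  rw [gdeg_eq_natCard]
  refine Nat.card_congr ?_
  exact Equiv.trans
    { toFun := fun x => ⟨x.1.1, x.1.2, x.2⟩
      invFun := fun y => ⟨⟨y.1, y.2.1⟩, y.2.2⟩
      left_inv := fun _ => rfl
      right_inv := fun _ => rfl } (G.incidenceSetEquivNeighborSet v)

lemma ncard_incidence {V : Type*} [Finite V] (G : SimpleGraph V) (v : V) :
    {e : ↥G.edgeSet | v ∈ (e : Sym2 V)}.ncard = gdeg G v := by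
  rw [← Nat.card_coe_set_eq, ← natCard_incidence G v]
  rfl

lemma sum_edges {V : Type*} [Finite V] [Fintype V]
    (G' : SimpleGraph V) [Fintype ↥G'.edgeSet] (f : V → ℕ)
    (F : {g : V → V → ℕ // ∀ a b, g a b = g b a}) (hF : ∀ a b, F.1 a b = f a + f b) :
    ∑ e : ↥G'.edgeSet, Sym2.lift F (e : Sym2 V) = ∑ v : V, gdeg G' v * f v := by
  classical
  have h1 : ∀ e : ↥G'.edgeSet, Sym2.lift F (e : Sym2 V)
      = ∑ w : V, if w ∈ (e : Sym2 V) then f w else 0 := by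
    rintro ⟨z, hz⟩
    induction z using Sym2.ind with
    | _ u v =>
      have hne : u ≠ v := G'.ne_of_adj (G'.mem_edgeSet.mp hz)
      have hfil : Finset.univ.filter (fun w => w ∈ s(u, v)) = {u, v} := by
        ext w
        simp [Sym2.mem_iff]
      rw [Sym2.lift_mk, hF, Finset.sum_ite, Finset.sum_const_zero, add_zero, hfil,
        Finset.sum_pair hne]
  rw [Finset.sum_congr rfl fun e _ => h1 e, Finset.sum_comm]
  refine Finset.sum_congr rfl fun w _ => ?_
  rw [Finset.sum_ite, Finset.sum_const_zero, add_zero, Finset.sum_const, smul_eq_mul,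
    ← Fintype.card_subtype, ← Nat.card_eq_fintype_card, natCard_incidence]

lemma Findex_eq {V : Type*} [Finite V] [Fintype V] (G : SimpleGraph V) :
    Findex G = ∑ v : V, gdeg G v ^ 3 := by
  unfold Findex
  exact Finset.sum_congr (congrArg (@Finset.univ V) (Subsingleton.elim _ _)) fun _ _ => rfl

lemma M1_eq {V : Type*} [Finite V] [Fintype V] (G : SimpleGraph V) :
    M1 G = ∑ v : V, gdeg G v ^ 2 := by
  unfold M1
  exact Finset.sum_congr (congrArg (@Finset.univ V) (Subsingleton.elim _ _)) fun _ _ => rfl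

lemma M4_eq {V : Type*} [Finite V] [Fintype V] (G : SimpleGraph V) :
    M4 G = ∑ v : V, gdeg G v ^ 4 := by
  unfold M4
  exact Finset.sum_congr (congrArg (@Finset.univ V) (Subsingleton.elim _ _)) fun _ _ => rfl

lemma ReZM_eq {V : Type*} [Finite V] (G : SimpleGraph V) [Fintype ↥G.edgeSet] :
    ReZM G = ∑ e : ↥G.edgeSet,
      Sym2.lift ⟨fun u v => gdeg G u * gdeg G v * (gdeg G u + gdeg G v),
        fun u v => by dsimp only; ring⟩ (e : Sym2 V) := by
  unfold ReZM
  exact Finset.sum_congr (congrArg (@Finset.univ _) (Subsingleton.elim _ _)) fun _ _ => rfl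

lemma numEdges_eq {V : Type*} (G : SimpleGraph V) [Fintype ↥G.edgeSet] :
    numEdges G = Fintype.card ↥G.edgeSet :=
  Nat.card_eq_fintype_card

lemma sum_gdeg {V : Type*} [Finite V] [Fintype V] (G : SimpleGraph V) [Fintype ↥G.edgeSet] :
    ∑ v : V, gdeg G v = 2 * numEdges G := by
  have h := sum_edges G (fun _ => 1) ⟨fun _ _ => 2, fun _ _ => rfl⟩ (fun _ _ => rfl)
  have hconst : ∀ e : ↥G.edgeSet,
      Sym2.lift (⟨fun _ _ => 2, fun _ _ => rfl⟩ : {g : V → V → ℕ // ∀ a b, g a b = g b a})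
        (e : Sym2 V) = 2 := by
    rintro ⟨z, hz⟩
    induction z using Sym2.ind with
    | _ u v => rw [Sym2.lift_mk]
  rw [Finset.sum_congr rfl fun e _ => hconst e, Finset.sum_const, smul_eq_mul,
    Finset.card_univ, ← Nat.card_eq_fintype_card, mul_comm] at h
  calc ∑ v : V, gdeg G v = ∑ v : V, gdeg G v * 1 := by simp
    _ = 2 * numEdges G := by rw [← h]; rfl

section JoinDegrees

variable {V₁ V₂ : Type*} [Finite V₁] [Finite V₂] (G₁ : SimpleGraph V₁) (G₂ : SimpleGraph V₂)

lemma gdeg_vq_inl_inl (v : V₁) :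
    gdeg (vertexQJoin G₁ G₂) (Sum.inl (Sum.inl v)) = gdeg G₁ v + Nat.card V₂ := by
  classical
  have hset : (vertexQJoin G₁ G₂).neighborSet (Sum.inl (Sum.inl v))
      = ((fun e : ↥G₁.edgeSet => (Sum.inl (Sum.inr e) : (V₁ ⊕ ↥G₁.edgeSet) ⊕ V₂)) ''
          {e : ↥G₁.edgeSet | v ∈ (e : Sym2 V₁)})
        ∪ (Sum.inr '' Set.univ) := by
    ext x
    rcases x with (w | e) | w
    · constructor
      · intro h
        exact absurd h (fun h => h)
      · rintro (⟨e, _, heq⟩ | ⟨w', _, heq⟩) <;> simp at heq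
    · constructor
      · intro h
        exact Or.inl ⟨e, h, rfl⟩
      · rintro (⟨e', he', heq⟩ | ⟨w', _, heq⟩)
        · obtain rfl : e' = e := by simpa using heq
          exact he'
        · simp at heq
    · constructor
      · intro _
        exact Or.inr ⟨w, trivial, rfl⟩
      · intro _
        exact rfl
  rw [gdeg_eq_natCard, hset, Nat.card_coe_set_eq,
    Set.ncard_union_eq ?_ (Set.toFinite _) (Set.toFinite _)]
  · rw [Set.ncard_image_of_injective _ (fun a b h => by simpa using h), ncard_incidence,
      Set.ncard_image_of_injective _ Sum.inr_injective, Set.ncard_univ]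
  · rw [Set.disjoint_left]
    rintro x ⟨e, _, rfl⟩ ⟨w, _, heq⟩
    simp at heq

lemma gdeg_vq_inr (w : V₂) :
    gdeg (vertexQJoin G₁ G₂) (Sum.inr w) = gdeg G₂ w + Nat.card V₁ := by
  classical
  have hset : (vertexQJoin G₁ G₂).neighborSet (Sum.inr w)
      = ((Sum.inr : V₂ → (V₁ ⊕ ↥G₁.edgeSet) ⊕ V₂) '' G₂.neighborSet w)
        ∪ ((fun v : V₁ => (Sum.inl (Sum.inl v) : (V₁ ⊕ ↥G₁.edgeSet) ⊕ V₂)) '' Set.univ) := by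
    ext x
    rcases x with (v | e) | w'
    · constructor
      · intro _
        exact Or.inr ⟨v, trivial, rfl⟩
      · intro _
        exact rfl
    · constructor
      · intro h
        exact absurd h (fun h => Bool.false_ne_true h)
      · rintro (⟨w', _, heq⟩ | ⟨v, _, heq⟩) <;> simp at heq
    · constructor
      · intro h
        exact Or.inl ⟨w', h, rfl⟩
      · rintro (⟨w'', hw, heq⟩ | ⟨v, _, heq⟩)
        · obtain rfl : w'' = w' := by simpa using heq
          exact hw
        · simp at heq
  rw [gdeg_eq_natCard, hset, Nat.card_coe_set_eq,
    Set.ncard_union_eq ?_ (Set.toFinite _) (Set.toFinite _)]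
  · rw [Set.ncard_image_of_injective _ Sum.inr_injective,
      Set.ncard_image_of_injective _ (fun a b h => by simpa using h), Set.ncard_univ,
      ← Nat.card_coe_set_eq, ← gdeg_eq_natCard]
  · rw [Set.disjoint_left]
    rintro x ⟨w'', _, rfl⟩ ⟨v, _, heq⟩
    simp at heq

lemma gdeg_vq_mid (u v : V₁) (h : G₁.Adj u v) (he : s(u, v) ∈ G₁.edgeSet) :
    gdeg (vertexQJoin G₁ G₂) (Sum.inl (Sum.inr ⟨s(u, v), he⟩))
      = gdeg G₁ u + gdeg G₁ v := by
  classical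
  set e₀ : ↥G₁.edgeSet := ⟨s(u, v), he⟩ with he₀
  have hne : u ≠ v := h.ne
  set A := {f : ↥G₁.edgeSet | u ∈ (f : Sym2 V₁)} with hA
  set B := {f : ↥G₁.edgeSet | v ∈ (f : Sym2 V₁)} with hB
  have hset : (vertexQJoin G₁ G₂).neighborSet (Sum.inl (Sum.inr e₀))
      = ((fun x : V₁ => (Sum.inl (Sum.inl x) : (V₁ ⊕ ↥G₁.edgeSet) ⊕ V₂)) '' {u, v})
        ∪ ((fun f : ↥G₁.edgeSet => (Sum.inl (Sum.inr f) : (V₁ ⊕ ↥G₁.edgeSet) ⊕ V₂)) ''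
            ((A ∪ B) \ {e₀})) := by
    ext x
    rcases x with (w | f) | w
    · constructor
      · intro hadj
        have hw : w ∈ (e₀ : Sym2 V₁) := hadj
        have : w = u ∨ w = v := by
          rw [he₀] at hw
          exact Sym2.mem_iff.mp hw
        exact Or.inl ⟨w, by simpa using this, rfl⟩
      · rintro (⟨x', hx', heq⟩ | ⟨f, _, heq⟩)
        · obtain rfl : x' = w := by simpa using heq
          show x' ∈ (e₀ : Sym2 V₁)
          rw [he₀]
          rcases hx' with rfl | rfl
          · exact Sym2.mem_mk_left _ _
          · exact Sym2.mem_mk_right _ _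
        · simp at heq
    · constructor
      · rintro ⟨hnef, x, hx1, hx2⟩
        refine Or.inr ⟨f, ⟨?_, ?_⟩, rfl⟩
        · have : x = u ∨ x = v := by
            rw [he₀] at hx1
            exact Sym2.mem_iff.mp hx1
          rcases this with rfl | rfl
          · exact Or.inl hx2
          · exact Or.inr hx2
        · simpa using (Ne.symm hnef)
      · rintro (⟨x', _, heq⟩ | ⟨f', ⟨hABm, hnef⟩, heq⟩)
        · simp at heq
        · obtain rfl : f' = f := by simpa using heq
          refine ⟨fun hh => hnef (by simp [hh.symm]), ?_⟩
          rcases hABm with hu | hv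
          · exact ⟨u, by rw [he₀]; exact Sym2.mem_mk_left _ _, hu⟩
          · exact ⟨v, by rw [he₀]; exact Sym2.mem_mk_right _ _, hv⟩
    · constructor
      · intro hadj
        exact absurd hadj (fun hh => Bool.false_ne_true hh)
      · rintro (⟨_, _, heq⟩ | ⟨_, _, heq⟩) <;> simp at heq
  have hAcard : A.ncard = gdeg G₁ u := ncard_incidence G₁ u
  have hBcard : B.ncard = gdeg G₁ v := ncard_incidence G₁ v
  have hABi : A ∩ B = {e₀} := by
    ext f
    constructor
    · rintro ⟨hu, hv⟩
      have : (f : Sym2 V₁) = s(u, v) := (Sym2.mem_and_mem_iff hne).mp ⟨hu, hv⟩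
      exact Subtype.ext this
    · intro hf
      obtain rfl : f = e₀ := hf
      exact ⟨by rw [he₀]; exact Sym2.mem_mk_left _ _, by rw [he₀]; exact Sym2.mem_mk_right _ _⟩
  have he₀AB : e₀ ∈ A ∪ B := Or.inl (by rw [hA]; exact Sym2.mem_mk_left _ _)
  have h1 : ((A ∪ B) \ {e₀}).ncard + 1 = (A ∪ B).ncard :=
    Set.ncard_diff_singleton_add_one he₀AB (Set.toFinite _)
  have h2 : (A ∪ B).ncard + (A ∩ B).ncard = A.ncard + B.ncard :=
    Set.ncard_union_add_ncard_inter A B (Set.toFinite _) (Set.toFinite _)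
  rw [hABi, Set.ncard_singleton, hAcard, hBcard] at h2
  rw [gdeg_eq_natCard, hset, Nat.card_coe_set_eq,
    Set.ncard_union_eq ?_ (Set.toFinite _) (Set.toFinite _)]
  · rw [Set.ncard_image_of_injective _ (fun a b hab => by simpa using hab),
      Set.ncard_image_of_injective _ (fun a b hab => by simpa using hab),
      Set.ncard_pair hne]
    omega
  · rw [Set.disjoint_left]
    rintro x ⟨x', _, rfl⟩ ⟨f, _, heq⟩
    simp at heq

lemma gdeg_vq_mid' (e : ↥G₁.edgeSet) :
    gdeg (vertexQJoin G₁ G₂) (Sum.inl (Sum.inr e))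
      = Sym2.lift ⟨fun a b => gdeg G₁ a + gdeg G₁ b, fun a b => add_comm _ _⟩
          (e : Sym2 V₁) := by
  obtain ⟨z, hz⟩ := e
  induction z using Sym2.ind with
  | _ u v =>
    rw [Sym2.lift_mk]
    exact gdeg_vq_mid G₁ G₂ u v (G₁.mem_edgeSet.mp hz) hz

end JoinDegrees

end AuxLemmas

theorem Findex_vertexQJoin {V₁ V₂ : Type*} [Finite V₁] [Finite V₂]
    (G₁ : SimpleGraph V₁) (G₂ : SimpleGraph V₂)
    (hc₁ : G₁.Connected) (hc₂ : G₂.Connected)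
    (n₁ n₂ m₁ m₂ : ℕ)
    (hn₁ : n₁ = Nat.card V₁) (hn₂ : n₂ = Nat.card V₂)
    (hm₁ : m₁ = numEdges G₁) (hm₂ : m₂ = numEdges G₂) :
    (Findex (vertexQJoin G₁ G₂) : ℤ) =
      (Findex G₁ : ℤ) + (Findex G₂ : ℤ) + 3 * (n₂ : ℤ) * (M1 G₁ : ℤ) + 3 * (n₁ : ℤ) * (M1 G₂ : ℤ)
        + (M4 G₁ : ℤ) + 3 * (ReZM G₁ : ℤ) + 6 * (m₁ : ℤ) * (n₂ : ℤ) ^ 2 + 6 * (m₂ : ℤ) * (n₁ : ℤ) ^ 2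
        + (n₁ : ℤ) * (n₂ : ℤ) * ((n₁ : ℤ) ^ 2 + (n₂ : ℤ) ^ 2) := by
  classical
  haveI fV₁ : Fintype V₁ := Fintype.ofFinite _
  haveI fV₂ : Fintype V₂ := Fintype.ofFinite _
  haveI fE₁ : Fintype ↥G₁.edgeSet := Fintype.ofFinite _
  haveI fE₂ : Fintype ↥G₂.edgeSet := Fintype.ofFinite _
  have key : Findex (vertexQJoin G₁ G₂)
      = Findex G₁ + Findex G₂ + 3 * Nat.card V₂ * M1 G₁ + 3 * Nat.card V₁ * M1 G₂
        + M4 G₁ + 3 * ReZM G₁ + 6 * numEdges G₁ * (Nat.card V₂) ^ 2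
        + 6 * numEdges G₂ * (Nat.card V₁) ^ 2
        + Nat.card V₁ * Nat.card V₂ * ((Nat.card V₁) ^ 2 + (Nat.card V₂) ^ 2) := by
    rw [Findex_eq, Fintype.sum_sum_type, Fintype.sum_sum_type]
    have hS1 : ∑ v : V₁, gdeg (vertexQJoin G₁ G₂) (Sum.inl (Sum.inl v)) ^ 3
        = Findex G₁ + 3 * Nat.card V₂ * M1 G₁ + 3 * (Nat.card V₂) ^ 2 * (2 * numEdges G₁)
          + Nat.card V₁ * (Nat.card V₂) ^ 3 := by
      rw [Finset.sum_congr rfl fun v _ => by rw [gdeg_vq_inl_inl]]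
      rw [Finset.sum_congr rfl (fun v _ =>
        (by ring : (gdeg G₁ v + Nat.card V₂) ^ 3
          = gdeg G₁ v ^ 3 + 3 * Nat.card V₂ * gdeg G₁ v ^ 2
            + 3 * (Nat.card V₂) ^ 2 * gdeg G₁ v + (Nat.card V₂) ^ 3))]
      rw [Finset.sum_add_distrib, Finset.sum_add_distrib, Finset.sum_add_distrib,
        ← Finset.mul_sum, ← Finset.mul_sum, Finset.sum_const, smul_eq_mul, Finset.card_univ,
        ← Findex_eq, ← M1_eq, sum_gdeg, ← Nat.card_eq_fintype_card]
    have hS3 : ∑ w : V₂, gdeg (vertexQJoin G₁ G₂) (Sum.inr w) ^ 3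
        = Findex G₂ + 3 * Nat.card V₁ * M1 G₂ + 3 * (Nat.card V₁) ^ 2 * (2 * numEdges G₂)
          + Nat.card V₂ * (Nat.card V₁) ^ 3 := by
      rw [Finset.sum_congr rfl fun w _ => by rw [gdeg_vq_inr]]
      rw [Finset.sum_congr rfl (fun w _ =>
        (by ring : (gdeg G₂ w + Nat.card V₁) ^ 3
          = gdeg G₂ w ^ 3 + 3 * Nat.card V₁ * gdeg G₂ w ^ 2
            + 3 * (Nat.card V₁) ^ 2 * gdeg G₂ w + (Nat.card V₁) ^ 3))]
      rw [Finset.sum_add_distrib, Finset.sum_add_distrib, Finset.sum_add_distrib,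
        ← Finset.mul_sum, ← Finset.mul_sum, Finset.sum_const, smul_eq_mul, Finset.card_univ,
        ← Findex_eq, ← M1_eq, sum_gdeg, ← Nat.card_eq_fintype_card]
    have hS2 : ∑ e : ↥G₁.edgeSet, gdeg (vertexQJoin G₁ G₂) (Sum.inl (Sum.inr e)) ^ 3
        = M4 G₁ + 3 * ReZM G₁ := by
      rw [Finset.sum_congr rfl fun e _ => by rw [gdeg_vq_mid']]
      have hpt : ∀ e : ↥G₁.edgeSet,
          (Sym2.lift ⟨fun a b => gdeg G₁ a + gdeg G₁ b, fun a b => add_comm _ _⟩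
              (e : Sym2 V₁)) ^ 3
            = Sym2.lift ⟨fun a b => gdeg G₁ a ^ 3 + gdeg G₁ b ^ 3, fun a b => add_comm _ _⟩
                (e : Sym2 V₁)
              + 3 * Sym2.lift ⟨fun a b => gdeg G₁ a * gdeg G₁ b * (gdeg G₁ a + gdeg G₁ b),
                  fun a b => by dsimp only; ring⟩ (e : Sym2 V₁) := by
        rintro ⟨z, hz⟩
        induction z using Sym2.ind with
        | _ a b =>
          simp only [Sym2.lift_mk]
          ring
      rw [Finset.sum_congr rfl fun e _ => hpt e, Finset.sum_add_distrib, ← Finset.mul_sum,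
        sum_edges G₁ (fun a => gdeg G₁ a ^ 3) _ (fun _ _ => rfl), ← ReZM_eq, M4_eq]
      congr 1
      exact Finset.sum_congr rfl fun v _ => by ring
    rw [hS1, hS2, hS3]
    ring
  subst hn₁ hn₂ hm₁ hm₂
  exact_mod_cast key
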